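/- With the same setup as the consistency lemma (fixed points $x^1,\dots,x^N$, uniformly random partition into batches of size $p \ge 2$, $N = pn \ge 3$), the variance of the random batch force error satisfies $\mathbb{E}|\chi_i|^2 = \left(\frac{1}{p-1} - \frac{1}{N-1}\right) \Lambda_i(x)$, where $\Lambda_i(x) = \frac{1}{N-2}\sum_{j \ne i} \left| K(x^i - x^j) - \frac{1}{N-1}\sum_{k \ne i} K(x^i - x^k) \right|^2$. -/

import Mathlib

open scoped BigOperators

open Finset


variable {α : Type*} [Fintype α] [DecidableEq α]

/-- The order isomorphism of the `Finset` lattice induced by a permutation. -/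
def permOrderIso (σ : Equiv.Perm α) : Finset α ≃o Finset α where
  toEquiv := σ.finsetCongr
  map_rel_iff' := by
    intro s t
    simp [Equiv.finsetCongr_apply, Finset.map_subset_map]

/-- The action of a permutation on a finpartition of `univ`. -/
def permAct (σ : Equiv.Perm α) (P : Finpartition (univ : Finset α)) :
    Finpartition (univ : Finset α) :=
  (P.map (permOrderIso σ)).copy (by
    simp [permOrderIso, Equiv.finsetCongr_apply, Finset.map_univ_equiv])

lemma mem_permAct_parts {σ : Equiv.Perm α} {P : Finpartition (univ : Finset α)} {b : Finset α} :
    b ∈ (permAct σ P).parts ↔ ∃ c ∈ P.parts, c.map σ.toEmbedding = b := by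
  simp only [permAct, Finpartition.copy_parts, Finpartition.parts_map, Finset.mem_map]
  constructor
  · rintro ⟨c, hc, rfl⟩
    exact ⟨c, hc, rfl⟩
  · rintro ⟨c, hc, rfl⟩
    exact ⟨c, hc, rfl⟩

lemma permAct_part (σ : Equiv.Perm α) (P : Finpartition (univ : Finset α)) (a : α) :
    (permAct σ P).part (σ a) = (P.part a).map σ.toEmbedding := by
  refine ((permAct σ P).part_eq_of_mem ?_ ?_)
  · exact mem_permAct_parts.2 ⟨P.part a, P.part_mem.2 (mem_univ a), rfl⟩
  · simp only [Finset.mem_map, Equiv.coe_toEmbedding]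
    exact ⟨a, P.mem_part (mem_univ a), rfl⟩

lemma permAct_permAct (σ : Equiv.Perm α) (P : Finpartition (univ : Finset α)) :
    permAct σ⁻¹ (permAct σ P) = P := by
  ext b
  simp only [mem_permAct_parts]
  constructor
  · rintro ⟨c, ⟨e, he, rfl⟩, rfl⟩
    rw [Finset.map_map]
    convert he using 1
    ext a
    simp
  · intro hb
    refine ⟨b.map σ.toEmbedding, ⟨b, hb, rfl⟩, ?_⟩
    rw [Finset.map_map]
    ext a
    simp

lemma map_perm_inv_map (σ : Equiv.Perm α) (s : Finset α) :
    (s.map σ⁻¹.toEmbedding).map σ.toEmbedding = s := by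
  rw [Finset.map_map]; ext a; simp

lemma permAct_mem_filter (σ : Equiv.Perm α) (p : ℕ)
    {P : Finpartition (univ : Finset α)} (hP : ∀ b ∈ P.parts, b.card = p) :
    ∀ b ∈ (permAct σ P).parts, b.card = p := by
  intro b hb
  obtain ⟨c, hc, rfl⟩ := mem_permAct_parts.1 hb
  rw [Finset.card_map]
  exact hP c hc

lemma card_filter_permAct (σ : Equiv.Perm α) (i : α) (hσ : σ i = i) (p : ℕ)
    (T : Finset α → Prop) [DecidablePred T] :
    ((univ.filter fun P : Finpartition (univ : Finset α) => ∀ b ∈ P.parts, b.card = p).filter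
        fun P => T ((P.part i).map σ.toEmbedding)).card
      = ((univ.filter fun P : Finpartition (univ : Finset α) => ∀ b ∈ P.parts, b.card = p).filter
        fun P => T (P.part i)).card := by
  have hσi : σ⁻¹ i = i := by
    conv_lhs => rw [← hσ]
    simp
  have hpart : ∀ P : Finpartition (univ : Finset α),
      (permAct σ P).part i = (P.part i).map σ.toEmbedding := by
    intro P
    conv_lhs => rw [← hσ]
    exact permAct_part σ P i
  have hpart' : ∀ P : Finpartition (univ : Finset α),
      (permAct σ⁻¹ P).part i = (P.part i).map σ⁻¹.toEmbedding := by
    intro P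
    conv_lhs => rw [← hσi]
    exact permAct_part σ⁻¹ P i
  apply Finset.card_nbij' (permAct σ) (permAct σ⁻¹)
  · intro P hP
    simp only [Finset.mem_coe, Finset.mem_filter, Finset.mem_univ, true_and] at hP ⊢
    exact ⟨permAct_mem_filter σ p hP.1, by rw [hpart]; exact hP.2⟩
  · intro P hP
    simp only [Finset.mem_coe, Finset.mem_filter, Finset.mem_univ, true_and] at hP ⊢
    refine ⟨permAct_mem_filter σ⁻¹ p hP.1, ?_⟩
    rw [hpart', map_perm_inv_map]
    exact hP.2
  · intro P _
    exact permAct_permAct σ P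
  · intro P _
    have := permAct_permAct σ⁻¹ P
    rwa [inv_inv] at this

lemma exists_equipartition (p n : ℕ) (hp : 0 < p) :
    ∃ P : Finpartition (univ : Finset (Fin (p * n))), ∀ b ∈ P.parts, b.card = p := by
  classical
  set e : Fin (p * n) → Fin p × Fin n := fun a => finProdFinEquiv.symm a with he
  set s : Setoid (Fin (p * n)) :=
    ⟨fun a b => (e a).2 = (e b).2, ⟨fun _ => rfl, Eq.symm, Eq.trans⟩⟩ with hs
  have : DecidableRel s.r := fun a b => by
    change Decidable ((e a).2 = (e b).2); infer_instance
  refine ⟨Finpartition.ofSetoid s, ?_⟩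
  intro b hb
  obtain ⟨a, _, rfl⟩ := (Finpartition.ofSetoid s).part_surjOn hb
  have hmem : ∀ c, c ∈ (Finpartition.ofSetoid s).part a ↔ (e a).2 = (e c).2 := fun c =>
    Finpartition.mem_part_ofSetoid_iff_rel
  rw [show ((Finpartition.ofSetoid s).part a)
      = univ.filter (fun c => (e c).2 = (e a).2) by
    ext c; simp [hmem c, eq_comm]]
  rw [show (univ.filter (fun c => (e c).2 = (e a).2)).card
      = (univ : Finset (Fin p)).card from ?_, Finset.card_univ, Fintype.card_fin]
  apply Finset.card_nbij' (fun c => (e c).1) (fun k => finProdFinEquiv (k, (e a).2))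
  · intro c _; exact mem_univ _
  · intro k _
    simp only [Finset.mem_coe, Finset.mem_filter, Finset.mem_univ, true_and, he]
    rw [Equiv.symm_apply_apply]
  · intro c hc
    simp only [Finset.mem_coe, Finset.mem_filter, Finset.mem_univ, true_and] at hc
    rw [← hc]
    show finProdFinEquiv ((e c).1, (e c).2) = c
    rw [Prod.mk.eta, he]
    exact finProdFinEquiv.apply_symm_apply c
  · intro k _
    show (finProdFinEquiv.symm (finProdFinEquiv _)).1 = k
    rw [Equiv.symm_apply_apply]

set_option maxHeartbeats 1200000 in
/-- Variance of the random batch force error: with fixed points `x¹,…,x^N` (`N = p*n ≥ 3`,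
`p ≥ 2`) and a uniformly random partition into batches of size `p`,
`𝔼|χ_i|² = (1/(p-1) - 1/(N-1)) Λ_i(x)` where
`Λ_i(x) = (N-2)⁻¹ ∑_{j≠i} |K(xⁱ-xʲ) - (N-1)⁻¹ ∑_{k≠i} K(xⁱ-xᵏ)|²`.
The expectation over the uniform partition is expressed as the sum over all admissible
partitions divided by their number. -/
theorem stmt_4 (d p n : ℕ) (hp : 2 ≤ p) (hn : 0 < n) (hN : 3 ≤ p * n)
    (K : EuclideanSpace ℝ (Fin d) → EuclideanSpace ℝ (Fin d))
    (x : Fin (p * n) → EuclideanSpace ℝ (Fin d)) (i : Fin (p * n)) :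
    (∑ᶠ P ∈ {P : Finpartition (Finset.univ : Finset (Fin (p * n))) |
          ∀ b ∈ P.parts, b.card = p},
        ‖((p : ℝ) - 1)⁻¹ • ∑ j ∈ (P.part i).erase i, K (x i - x j)
          - (((p * n : ℕ) : ℝ) - 1)⁻¹ • ∑ j ∈ Finset.univ.erase i, K (x i - x j)‖ ^ 2)
      / ({P : Finpartition (Finset.univ : Finset (Fin (p * n))) |
          ∀ b ∈ P.parts, b.card = p}.ncard : ℝ)
      = (((p : ℝ) - 1)⁻¹ - (((p * n : ℕ) : ℝ) - 1)⁻¹)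
        * ((((p * n : ℕ) : ℝ) - 2)⁻¹
          * ∑ j ∈ Finset.univ.erase i,
              ‖K (x i - x j)
                - (((p * n : ℕ) : ℝ) - 1)⁻¹ • ∑ k ∈ Finset.univ.erase i, K (x i - x k)‖ ^ 2) := by
  classical
  set S : Finset (Finpartition (univ : Finset (Fin (p * n)))) :=
    univ.filter (fun P => ∀ b ∈ P.parts, b.card = p) with hS
  have hset : {P : Finpartition (Finset.univ : Finset (Fin (p * n))) |
      ∀ b ∈ P.parts, b.card = p} = ↑S := by
    ext P; simp [hS]
  rw [hset, finsum_mem_coe_finset, Set.ncard_coe_finset]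
  set E : Finset (Fin (p * n)) := univ.erase i with hE
  have hNE : E.card = p * n - 1 := by
    rw [hE, card_erase_of_mem (mem_univ i), card_univ, Fintype.card_fin]
  set m : EuclideanSpace ℝ (Fin d) := (((p * n : ℕ) : ℝ) - 1)⁻¹ • ∑ k ∈ E, K (x i - x k)
    with hm
  set y : Fin (p * n) → EuclideanSpace ℝ (Fin d) := fun j => K (x i - x j) - m with hy
  have hp1 : ((p : ℝ) - 1) ≠ 0 := by
    have : (2:ℝ) ≤ (p:ℝ) := by exact_mod_cast hp
    linarith
  have hN1 : (((p * n : ℕ) : ℝ) - 1) ≠ 0 := by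
    have : (3:ℝ) ≤ ((p*n : ℕ):ℝ) := by exact_mod_cast hN
    linarith
  have hN2 : (((p * n : ℕ) : ℝ) - 2) ≠ 0 := by
    have : (3:ℝ) ≤ ((p*n : ℕ):ℝ) := by exact_mod_cast hN
    linarith
  -- the recentered forces sum to zero
  have hy_sum : ∑ j ∈ E, y j = 0 := by
    have h1 : ∑ j ∈ E, y j = (∑ j ∈ E, K (x i - x j)) - (E.card : ℝ) • m := by
      rw [Finset.sum_sub_distrib, Finset.sum_const, Nat.cast_smul_eq_nsmul]
    rw [h1, hNE, hm, smul_smul, Nat.cast_sub (show 1 ≤ p * n by omega), Nat.cast_one,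
      mul_inv_cancel₀ hN1, one_smul, sub_self]
  have hpart_mem : ∀ P : Finpartition (univ : Finset (Fin (p * n))), i ∈ P.part i :=
    fun P => P.mem_part (mem_univ i)
  have hpart_card : ∀ P ∈ S, (P.part i).card = p := by
    intro P hP
    rw [hS, mem_filter] at hP
    exact hP.2 _ (P.part_mem.2 (mem_univ i))
  have hB' : ∀ P : Finpartition (univ : Finset (Fin (p * n))),
      (P.part i).erase i = E.filter (· ∈ P.part i) := by
    intro P
    ext j
    simp only [mem_erase, hE, mem_filter, mem_univ, and_true, true_and]
  have hB'card : ∀ P ∈ S, ((P.part i).erase i).card = p - 1 := by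
    intro P hP
    rw [card_erase_of_mem (hpart_mem P), hpart_card P hP]
  -- χ in terms of y
  have hchi : ∀ P ∈ S,
      ((p : ℝ) - 1)⁻¹ • (∑ j ∈ (P.part i).erase i, K (x i - x j)) - m
        = ((p : ℝ) - 1)⁻¹ • ∑ j ∈ (P.part i).erase i, y j := by
    intro P hP
    have h1 : ∑ j ∈ (P.part i).erase i, K (x i - x j)
        = (∑ j ∈ (P.part i).erase i, y j) + ((p : ℝ) - 1) • m := by
      have : ∑ j ∈ (P.part i).erase i, y j
          = (∑ j ∈ (P.part i).erase i, K (x i - x j))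
            - (((P.part i).erase i).card : ℝ) • m := by
        rw [Finset.sum_sub_distrib, Finset.sum_const, Nat.cast_smul_eq_nsmul]
      rw [this, hB'card P hP, Nat.cast_sub (show 1 ≤ p by omega), Nat.cast_one]
      abel
    rw [h1, smul_add, smul_smul, inv_mul_cancel₀ hp1, one_smul, add_sub_cancel_right]
  set g : Fin (p * n) → Fin (p * n) → ℝ := fun j k => inner ℝ (y j) (y k) with hg
  have hnorm : ∀ P ∈ S,
      ‖((p : ℝ) - 1)⁻¹ • (∑ j ∈ (P.part i).erase i, K (x i - x j)) - m‖ ^ 2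
        = ((p : ℝ) - 1)⁻¹ ^ 2 * ∑ j ∈ E, ∑ k ∈ E,
            (if j ∈ P.part i then (if k ∈ P.part i then g j k else 0) else 0) := by
    intro P hP
    rw [hchi P hP, norm_smul, mul_pow, Real.norm_eq_abs, sq_abs, ← real_inner_self_eq_norm_sq]
    congr 1
    rw [hB' P, Finset.sum_filter]
    simp only [sum_inner, inner_sum]
    refine Finset.sum_congr rfl fun j _ => Finset.sum_congr rfl fun k _ => ?_
    by_cases ha : j ∈ P.part i <;> by_cases hb : k ∈ P.part i <;>
      simp [ha, hb, hg, mul_comm, real_inner_comm]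
  set cnt : Fin (p * n) → Fin (p * n) → ℕ :=
    fun j k => (S.filter fun P => j ∈ P.part i ∧ k ∈ P.part i).card with hcnt
  have hsum_swap : ∑ P ∈ S, ∑ j ∈ E, ∑ k ∈ E,
        (if j ∈ P.part i then (if k ∈ P.part i then g j k else 0) else 0)
      = ∑ j ∈ E, ∑ k ∈ E, (cnt j k : ℝ) * g j k := by
    rw [Finset.sum_comm]
    refine Finset.sum_congr rfl fun j _ => ?_
    rw [Finset.sum_comm]
    refine Finset.sum_congr rfl fun k _ => ?_
    simp only [← ite_and, hcnt]
    rw [← Finset.sum_filter, Finset.sum_const, nsmul_eq_mul]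
  have hmemE : ∀ j : Fin (p * n), j ∈ E ↔ j ≠ i := by
    intro j; rw [hE, mem_erase]; simp
  clear_value S E m y g cnt
  have hconst1 : ∀ j ∈ E, ∀ j' ∈ E,
      (S.filter fun P => j ∈ P.part i).card = (S.filter fun P => j' ∈ P.part i).card := by
    intro j hj j' hj'
    have hji : i ≠ j := fun h => (hmemE j).1 hj h.symm
    have hj'i : i ≠ j' := fun h => (hmemE j').1 hj' h.symm
    have h := card_filter_permAct (Equiv.swap j j') i
      (Equiv.swap_apply_of_ne_of_ne hji hj'i) p (fun s => j ∈ s)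
    simp only [Finset.mem_map_equiv, Equiv.symm_swap, Equiv.swap_apply_left] at h
    rw [hS]
    convert h.symm using 2
  have hconst2 : ∀ j ∈ E, ∀ k ∈ E, ∀ j' ∈ E, ∀ k' ∈ E, j ≠ k → j' ≠ k' →
      cnt j k = cnt j' k' := by
    intro j hj k hk j' hj' k' hk' hjk hjk'
    have hji : j ≠ i := (hmemE j).1 hj
    have hki : k ≠ i := (hmemE k).1 hk
    have hj'i : j' ≠ i := (hmemE j').1 hj'
    have hk'i : k' ≠ i := (hmemE k').1 hk'
    set τ := Equiv.swap j j' with hτ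
    set k₁ := τ k' with hk₁
    set ρ := Equiv.swap k k₁ with hρ
    set σ := τ.trans ρ with hσdef
    have hτi : τ i = i := Equiv.swap_apply_of_ne_of_ne (fun h => hji h.symm) (fun h => hj'i h.symm)
    have hτj' : τ j' = j := Equiv.swap_apply_right j j'
    have hk₁j : k₁ ≠ j := fun h => hjk' (τ.injective (h.trans hτj'.symm)).symm
    have hk₁i : k₁ ≠ i := fun h => hk'i (τ.injective (h.trans hτi.symm))
    have hρj : ρ j = j := Equiv.swap_apply_of_ne_of_ne (fun h => hjk h) (fun h => hk₁j h.symm)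
    have hρi : ρ i = i := Equiv.swap_apply_of_ne_of_ne (fun h => hki h.symm) (fun h => hk₁i h.symm)
    have hσi : σ i = i := by rw [hσdef, Equiv.trans_apply, hτi, hρi]
    have hσj' : σ j' = j := by rw [hσdef, Equiv.trans_apply, hτj', hρj]
    have hσk' : σ k' = k := by
      rw [hσdef, Equiv.trans_apply, ← hk₁, hρ, Equiv.swap_apply_right]
    have hsymmj : σ.symm j = j' := by rw [← hσj', Equiv.symm_apply_apply]
    have hsymmk : σ.symm k = k' := by rw [← hσk', Equiv.symm_apply_apply]
    have h := card_filter_permAct σ i hσi p (fun s => j ∈ s ∧ k ∈ s)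
    simp only [Finset.mem_map_equiv, hsymmj, hsymmk] at h
    rw [hcnt]
    rw [hS]
    convert h.symm using 2
  -- nonemptiness
  have hSne : S.Nonempty := by
    obtain ⟨P₀, hP₀⟩ := exists_equipartition p n (by omega)
    refine ⟨P₀, ?_⟩
    rw [hS, mem_filter]
    exact ⟨mem_univ _, hP₀⟩
  have hM : ((S.card : ℝ)) ≠ 0 :=
    Nat.cast_ne_zero.2 (Finset.card_ne_zero_of_mem hSne.choose_spec)
  -- pick reference elements
  obtain ⟨j₀, hj₀⟩ : E.Nonempty := Finset.card_pos.1 (by omega)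
  obtain ⟨k₀, hk₀⟩ : (E.erase j₀).Nonempty :=
    Finset.card_pos.1 (by rw [card_erase_of_mem hj₀]; omega)
  have hk₀E : k₀ ∈ E := mem_of_mem_erase hk₀
  have hk₀j₀ : k₀ ≠ j₀ := (mem_erase.1 hk₀).1
  set C1 : ℕ := (S.filter fun P => j₀ ∈ P.part i).card with hC1
  set C2 : ℕ := cnt j₀ k₀ with hC2
  have hdiag : ∀ j, cnt j j = (S.filter fun P => j ∈ P.part i).card := by
    intro j; rw [hcnt]; simp only [and_self]
  -- first moment relation
  have hsum1 : ∑ j ∈ E, (S.filter fun P => j ∈ P.part i).card = S.card * (p - 1) := by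
    have hc : ∀ j ∈ E, (S.filter fun P => j ∈ P.part i).card
        = ∑ P ∈ S, if j ∈ P.part i then 1 else 0 := by
      intro j _; rw [Finset.card_filter]
    rw [Finset.sum_congr rfl hc, Finset.sum_comm]
    have h2 : ∀ P ∈ S, (∑ j ∈ E, if j ∈ P.part i then 1 else 0) = p - 1 := by
      intro P hP
      rw [← Finset.card_filter, ← hB' P, hB'card P hP]
    rw [Finset.sum_congr rfl h2, Finset.sum_const, smul_eq_mul]
  have hrel1 : (p * n - 1) * C1 = S.card * (p - 1) := by
    have h := hsum1
    rw [Finset.sum_congr rfl (fun j hj => hconst1 j hj j₀ hj₀)] at h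
    rw [Finset.sum_const, smul_eq_mul, hNE] at h
    exact h
  -- second moment relation
  have hsum2 : ∑ k ∈ E.erase j₀, cnt j₀ k = C1 * (p - 2) := by
    have hc : ∀ k ∈ E.erase j₀, cnt j₀ k
        = ∑ P ∈ S, if j₀ ∈ P.part i ∧ k ∈ P.part i then 1 else 0 := by
      intro k _
      simp only [hcnt]
      rw [Finset.card_filter]
    rw [Finset.sum_congr rfl hc, Finset.sum_comm]
    have h2 : ∀ P ∈ S, (∑ k ∈ E.erase j₀, if j₀ ∈ P.part i ∧ k ∈ P.part i then 1 else 0)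
        = if j₀ ∈ P.part i then p - 2 else 0 := by
      intro P hP
      by_cases hj₀P : j₀ ∈ P.part i
      · simp only [hj₀P, true_and, if_true]
        rw [← Finset.card_filter]
        have : (E.erase j₀).filter (· ∈ P.part i) = ((P.part i).erase i).erase j₀ := by
          rw [hB' P]
          ext a
          simp only [mem_erase, mem_filter]
          tauto
        have hjmem : j₀ ∈ (P.part i).erase i := by
          rw [hB' P, mem_filter]; exact ⟨hj₀, hj₀P⟩
        rw [this, card_erase_of_mem hjmem, hB'card P hP]
        omega
      · simp [hj₀P]
    rw [Finset.sum_congr rfl h2]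
    rw [Finset.sum_ite, Finset.sum_const, Finset.sum_const, smul_eq_mul, smul_eq_mul,
      mul_zero, add_zero, hC1]
  have hrel2 : (p * n - 2) * C2 = C1 * (p - 2) := by
    have h := hsum2
    rw [Finset.sum_congr rfl (fun k hk => hconst2 j₀ hj₀ k (mem_of_mem_erase hk) j₀ hj₀ k₀ hk₀E
      (fun he => (mem_erase.1 hk).1 he.symm) (fun he => hk₀j₀ he.symm))] at h
    rw [Finset.sum_const, smul_eq_mul, card_erase_of_mem hj₀, hNE] at h
    rw [show p * n - 2 = p * n - 1 - 1 by omega, h]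
  -- assemble
  rw [Finset.sum_congr rfl hnorm, ← Finset.mul_sum, hsum_swap]
  have hTot : ∑ j ∈ E, ∑ k ∈ E, g j k = 0 := by
    have h1 : ∑ j ∈ E, ∑ k ∈ E, g j k
        = (inner ℝ (∑ j ∈ E, y j) (∑ k ∈ E, y k) : ℝ) := by
      rw [sum_inner]
      refine Finset.sum_congr rfl fun j _ => ?_
      rw [inner_sum]
      simp only [hg]
    rw [h1, hy_sum, inner_zero_left]
  have hOff : ∑ j ∈ E, ∑ k ∈ E.erase j, g j k = - ∑ j ∈ E, g j j := by
    have h1 : ∀ j ∈ E, ∑ k ∈ E.erase j, g j k = (∑ k ∈ E, g j k) - g j j := by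
      intro j hj
      rw [← Finset.add_sum_erase E _ hj]
      ring
    rw [Finset.sum_congr rfl h1, Finset.sum_sub_distrib, hTot, zero_sub]
  have hsplit : ∑ j ∈ E, ∑ k ∈ E, (cnt j k : ℝ) * g j k
      = ((C1 : ℝ) - (C2 : ℝ)) * ∑ j ∈ E, g j j := by
    have h1 : ∀ j ∈ E, ∑ k ∈ E, (cnt j k : ℝ) * g j k
        = (C1 : ℝ) * g j j + (C2 : ℝ) * ∑ k ∈ E.erase j, g j k := by
      intro j hj
      rw [← Finset.add_sum_erase E (fun k => (cnt j k : ℝ) * g j k) hj]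
      congr 1
      · rw [hdiag j, hconst1 j hj j₀ hj₀, hC1]
      · rw [Finset.mul_sum]
        refine Finset.sum_congr rfl fun k hk => ?_
        rw [hconst2 j hj k (mem_of_mem_erase hk) j₀ hj₀ k₀ hk₀E
          (fun h => (mem_erase.1 hk).1 h.symm) (fun h => hk₀j₀ h.symm), hC2]
    rw [Finset.sum_congr rfl h1, Finset.sum_add_distrib, ← Finset.mul_sum, ← Finset.mul_sum,
      hOff]
    ring
  rw [hsplit]
  have hrhs : ∑ j ∈ E, ‖K (x i - x j) - m‖ ^ 2 = ∑ j ∈ E, g j j := by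
    refine Finset.sum_congr rfl fun j _ => ?_
    simp only [hg, hy]
    rw [real_inner_self_eq_norm_sq]
  rw [hrhs]
  -- cast the counting relations to ℝ
  have hc1 : ((((p * n) : ℕ) : ℝ) - 1) * (C1 : ℝ) = (S.card : ℝ) * ((p : ℝ) - 1) := by
    have h := hrel1
    rify [show 1 ≤ p * n by omega, show 1 ≤ p by omega] at h
    push_cast
    linear_combination h
  have hc2 : ((((p * n) : ℕ) : ℝ) - 2) * (C2 : ℝ) = (C1 : ℝ) * ((p : ℝ) - 2) := by
    have h := hrel2
    rify [show 2 ≤ p * n by omega, hp] at h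
    push_cast
    linear_combination h
  have e1 : (C1 : ℝ) = (S.card : ℝ) * ((p : ℝ) - 1) / ((((p * n) : ℕ) : ℝ) - 1) := by
    rw [eq_div_iff hN1]
    linear_combination hc1
  have e2 : (C2 : ℝ) = (C1 : ℝ) * ((p : ℝ) - 2) / ((((p * n) : ℕ) : ℝ) - 2) := by
    rw [eq_div_iff hN2]
    linear_combination hc2
  have hpn : (((p * n) : ℕ) : ℝ) = (p : ℝ) * (n : ℝ) := by push_cast; ring
  have hN1' : (p : ℝ) * (n : ℝ) - 1 ≠ 0 := by rw [← hpn]; exact hN1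
  have hN2' : (p : ℝ) * (n : ℝ) - 2 ≠ 0 := by rw [← hpn]; exact hN2
  rw [div_eq_iff hM, e2, e1]
  field_simp [hp1, hN1, hN2, hN1', hN2']
  ring
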